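/- For K ∈ 𝒦(p,q), equality |E(K)| = 2·C(p,2)·C(q,2) holds if and only if K = K_p ⊗ K_q, the tensor product of the complete graphs on p and q vertices. -/

import Mathlib

open SimpleGraph

variable {α β : Type*}

/-- The tensor (categorical / direct) product of two simple graphs:
`(g,h)` and `(g',h')` are adjacent iff `g ~ g'` in `G` and `h ~ h'` in `H`. -/
def tensorProd (G : SimpleGraph α) (H : SimpleGraph β) : SimpleGraph (α × β) where
  Adj x y := G.Adj x.1 y.1 ∧ H.Adj x.2 y.2
  symm := ⟨fun _ _ h => ⟨h.1.symm, h.2.symm⟩⟩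
  loopless := ⟨fun x h => G.loopless.irrefl x.1 h.1⟩

infixl:70 " ⊗t " => tensorProd

@[simp] lemma tensorProd_adj (G : SimpleGraph α) (H : SimpleGraph β) (x y : α × β) :
    (G ⊗t H).Adj x y ↔ G.Adj x.1 y.1 ∧ H.Adj x.2 y.2 := Iff.rfl

/-- The 2-sum (sum modulo 2) of two graphs on a common vertex set: the edge set is
the symmetric difference of the two edge sets. -/
def twoSum (G H : SimpleGraph α) : SimpleGraph α where
  Adj u v := (G.Adj u v ∧ ¬ H.Adj u v) ∨ (H.Adj u v ∧ ¬ G.Adj u v)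
  symm := ⟨fun u v h => h.imp (fun h' => ⟨h'.1.symm, fun hh => h'.2 hh.symm⟩)
    (fun h' => ⟨h'.1.symm, fun hh => h'.2 hh.symm⟩)⟩
  loopless := ⟨fun u h => h.elim (fun h' => G.loopless.irrefl u h'.1) (fun h' => H.loopless.irrefl u h'.1)⟩

@[simp] lemma twoSum_adj (G H : SimpleGraph α) (u v : α) :
    (twoSum G H).Adj u v ↔ (G.Adj u v ∧ ¬ H.Adj u v) ∨ (H.Adj u v ∧ ¬ G.Adj u v) := Iff.rfl

/-- The iterated 2-sum `⊕_{k=1}^l F k` (`⊥`, the empty graph, is the neutral element). -/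
def twoSumMany {l : ℕ} (F : Fin l → SimpleGraph α) : SimpleGraph α :=
  (List.ofFn F).foldr twoSum ⊥

/-- `K ∈ 𝒦(p,q)`: `K` is a 2-sum `⊕_{k=1}^l (G_k ⊗ H_k)` of tensor products, where every
`G_k` is a graph on `p` fixed vertices with at least one edge and every `H_k` is a graph on
`q` fixed vertices with at least one edge. -/
def MemK (p q : ℕ) (K : SimpleGraph (Fin p × Fin q)) : Prop :=
  ∃ (l : ℕ) (G : Fin l → SimpleGraph (Fin p)) (H : Fin l → SimpleGraph (Fin q)),
    0 < l ∧ (∀ k, ∃ a b, (G k).Adj a b) ∧ (∀ k, ∃ c d, (H k).Adj c d) ∧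
    K = twoSumMany fun k => (G k) ⊗t (H k)

/-- A graph on `α × β` is cross-like if `(a,b) ~ (c,d)` implies `(a,d) ~ (c,b)`. -/
def CrossLike (K : SimpleGraph (α × β)) : Prop :=
  ∀ a c : α, ∀ b d : β, K.Adj (a, b) (c, d) → K.Adj (a, d) (c, b)

/-- The graph with the single edge `{a,b}` (for `a ≠ b`). -/
def singleEdge (a b : α) : SimpleGraph α := fromEdgeSet {s(a, b)}

/-- The tensor-elementary graph `E(i,i';j,j')`: the tensor product of the single-edge
graph with edge `{g_i, g_{i'}}` and the single-edge graph with edge `{h_j, h_{j'}}`. -/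
def tensorElem {p q : ℕ} (i i' : Fin p) (j j' : Fin q) : SimpleGraph (Fin p × Fin q) :=
  singleEdge i i' ⊗t singleEdge j j'


open Finset in
private lemma two_mul_choose_two' (n : ℕ) : 2 * n.choose 2 = n * (n - 1) := by
  rw [Nat.choose_two_right]
  refine Nat.mul_div_cancel' ?_
  cases n with
  | zero => simp
  | succ m => simpa [Nat.mul_comm] using (Nat.even_mul_succ_self m).two_dvd

private instance topTensorDec (p q : ℕ) :
    DecidableRel ((⊤ : SimpleGraph (Fin p)) ⊗t (⊤ : SimpleGraph (Fin q))).Adj :=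
  fun x y => inferInstanceAs (Decidable (x.1 ≠ y.1 ∧ x.2 ≠ y.2))

open Finset in
private lemma topTensor_degree (p q : ℕ) (v : Fin p × Fin q) :
    ((⊤ : SimpleGraph (Fin p)) ⊗t (⊤ : SimpleGraph (Fin q))).degree v = (p - 1) * (q - 1) := by
  rw [SimpleGraph.degree]
  have h : ((⊤ : SimpleGraph (Fin p)) ⊗t (⊤ : SimpleGraph (Fin q))).neighborFinset v =
      (univ.erase v.1) ×ˢ (univ.erase v.2) := by
    ext x
    simp [SimpleGraph.mem_neighborFinset, Finset.mem_product, ne_comm]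
  rw [h, card_product, card_erase_of_mem (mem_univ _), card_erase_of_mem (mem_univ _),
    card_univ, card_univ, Fintype.card_fin, Fintype.card_fin]

open Finset in
private lemma topTensor_card (p q : ℕ)
    (inst : Fintype ((⊤ : SimpleGraph (Fin p)) ⊗t (⊤ : SimpleGraph (Fin q))).edgeSet) :
    (@SimpleGraph.edgeFinset _ ((⊤ : SimpleGraph (Fin p)) ⊗t (⊤ : SimpleGraph (Fin q))) inst).card
      = 2 * (p.choose 2 * q.choose 2) := by
  have hinst : inst = SimpleGraph.fintypeEdgeSet _ := Subsingleton.elim _ _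
  subst hinst
  have h2 := SimpleGraph.sum_degrees_eq_twice_card_edges
    ((⊤ : SimpleGraph (Fin p)) ⊗t (⊤ : SimpleGraph (Fin q)))
  have hdeg : ∑ v : Fin p × Fin q,
      ((⊤ : SimpleGraph (Fin p)) ⊗t (⊤ : SimpleGraph (Fin q))).degree v
      = (p * q) * ((p - 1) * (q - 1)) := by
    simp only [topTensor_degree, Finset.sum_const, card_univ, Fintype.card_prod,
      Fintype.card_fin, smul_eq_mul]
  have key : 2 * (2 * (p.choose 2 * q.choose 2)) = (p * q) * ((p - 1) * (q - 1)) := by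
    have hp := two_mul_choose_two' p
    have hq := two_mul_choose_two' q
    calc 2 * (2 * (p.choose 2 * q.choose 2))
        = (2 * p.choose 2) * (2 * q.choose 2) := by ring
      _ = (p * (p - 1)) * (q * (q - 1)) := by rw [hp, hq]
      _ = (p * q) * ((p - 1) * (q - 1)) := by ring
  omega

private lemma foldr_twoSum_adj {α : Type*} {L : List (SimpleGraph α)} {u v : α}
    (h : (L.foldr twoSum ⊥).Adj u v) : ∃ G ∈ L, G.Adj u v := by
  induction L with
  | nil => exact absurd h (by simp [List.foldr])
  | cons G L ih =>
    rcases (twoSum_adj _ _ _ _).1 h with ⟨h1, _⟩ | ⟨h1, _⟩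
    · exact ⟨G, by simp, h1⟩
    · obtain ⟨G', hG', h'⟩ := ih h1
      exact ⟨G', by simp [hG'], h'⟩

private lemma memK_le_top {p q : ℕ} {K : SimpleGraph (Fin p × Fin q)} (hK : MemK p q K) :
    K ≤ (⊤ : SimpleGraph (Fin p)) ⊗t (⊤ : SimpleGraph (Fin q)) := by
  obtain ⟨l, G, H, -, -, -, rfl⟩ := hK
  intro u v h
  obtain ⟨F, hF, hadj⟩ := foldr_twoSum_adj h
  obtain ⟨k, rfl⟩ := List.mem_ofFn.1 hF
  exact ⟨hadj.1.ne, hadj.2.ne⟩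

/-- For `K ∈ 𝒦(p,q)`, equality `|E(K)| = 2·C(p,2)·C(q,2)` holds if and only if
`K = K_p ⊗ K_q`. -/
theorem memK_card_edges_eq_iff (p q : ℕ) (K : SimpleGraph (Fin p × Fin q))
    [Fintype K.edgeSet] (hK : MemK p q K) :
    K.edgeFinset.card = 2 * (p.choose 2 * q.choose 2) ↔
      K = (⊤ : SimpleGraph (Fin p)) ⊗t (⊤ : SimpleGraph (Fin q)) := by
  set T := (⊤ : SimpleGraph (Fin p)) ⊗t (⊤ : SimpleGraph (Fin q)) with hT
  constructor
  · intro hcard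
    have hle : K ≤ T := memK_le_top hK
    have hsub : K.edgeFinset ⊆ T.edgeFinset := SimpleGraph.edgeFinset_mono hle
    have hTcard : T.edgeFinset.card = 2 * (p.choose 2 * q.choose 2) := topTensor_card p q _
    have heq : K.edgeFinset = T.edgeFinset :=
      Finset.eq_of_subset_of_card_le hsub (by rw [hcard, hTcard])
    have : K.edgeSet = T.edgeSet := by
      rw [← SimpleGraph.coe_edgeFinset, ← SimpleGraph.coe_edgeFinset, heq]
    exact SimpleGraph.edgeSet_inj.1 this
  · rintro rfl
    exact topTensor_card p q _
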